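/- For any prime p ≥ 5, the sum ∑_{n=0}^{p-1} binomial(2n, n) is congruent to 1 modulo p if p ≡ 1 (mod 3), and congruent to -1 modulo p if p ≡ 2 (mod 3). -/
import Mathlib

open Finset

private lemma key_cb (p : ℕ) [Fact p.Prime] (hp5 : 5 ≤ p) :
    ∀ n < p, (Nat.centralBinom n : ZMod p) = (-4) ^ n * (Nat.choose (p / 2) n : ZMod p) := by
  have hp : p.Prime := Fact.out
  have hodd : p % 2 = 1 := hp.eq_two_or_odd.resolve_left (by omega)
  set m := p / 2 with hm
  have h2m : (2 * (m : ZMod p)) = -1 := by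
    have h : 2 * m + 1 = p := by omega
    have : ((2 * m + 1 : ℕ) : ZMod p) = 0 := by rw [h]; exact ZMod.natCast_self p
    push_cast at this
    linear_combination this
  intro n
  induction n with
  | zero => intro _; simp [Nat.centralBinom]
  | succ n ih =>
    intro hn1
    have hn : n < p := by omega
    have ihn := ih hn
    have hne : ((n + 1 : ℕ) : ZMod p) ≠ 0 := by
      rw [Ne, ZMod.natCast_eq_zero_iff]
      intro h
      have := Nat.le_of_dvd (by omega) h
      omega
    apply mul_left_cancel₀ hne
    have e1 : ((n : ZMod p) + 1) * (Nat.centralBinom (n + 1) : ZMod p)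
        = 2 * (2 * n + 1) * (Nat.centralBinom n : ZMod p) := by
      have := congrArg (fun k : ℕ => (k : ZMod p)) (Nat.succ_mul_centralBinom_succ n)
      push_cast at this
      linear_combination this
    have e2 : (Nat.choose m (n + 1) : ZMod p) * ((n : ZMod p) + 1)
        = (Nat.choose m n : ZMod p) * ((m - n : ℕ) : ZMod p) := by
      have := congrArg (fun k : ℕ => (k : ZMod p)) (Nat.choose_succ_right_eq m n)
      push_cast at this
      linear_combination this
    have hcast : ((m - n : ℕ) : ZMod p) * (Nat.choose m n : ZMod p)
        = ((m : ZMod p) - n) * (Nat.choose m n : ZMod p) := by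
      rcases le_or_gt n m with h | h
      · rw [Nat.cast_sub h]
      · simp [Nat.choose_eq_zero_of_lt h]
    push_cast
    linear_combination e1 + 2 * (2 * (n : ZMod p) + 1) * ihn + 4 * (-4 : ZMod p) ^ n * e2
      + 4 * (-4 : ZMod p) ^ n * hcast + 2 * (-4 : ZMod p) ^ n * (Nat.choose m n : ZMod p) * h2m

private lemma sum_cb (p : ℕ) [Fact p.Prime] (hp5 : 5 ≤ p) :
    (∑ n ∈ Finset.range p, (Nat.centralBinom n : ZMod p)) = (-3 : ZMod p) ^ (p / 2) := by
  set m := p / 2 with hm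
  have hmp : m + 1 ≤ p := by omega
  calc ∑ n ∈ range p, (Nat.centralBinom n : ZMod p)
      = ∑ n ∈ range p, (-4 : ZMod p) ^ n * (Nat.choose m n : ZMod p) := by
        exact Finset.sum_congr rfl fun n hn => key_cb p hp5 n (mem_range.mp hn)
    _ = ∑ n ∈ range (m + 1), (-4 : ZMod p) ^ n * (Nat.choose m n : ZMod p) := by
        refine (Finset.sum_subset (Finset.range_subset_range.mpr hmp) fun x _ hx => ?_).symm
        rw [mem_range, not_lt] at hx
        simp [Nat.choose_eq_zero_of_lt (by omega : m < x)]
    _ = ((-4 : ZMod p) + 1) ^ m := by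
        rw [add_pow]
        exact Finset.sum_congr rfl fun n hn => by simp [mul_assoc]
    _ = (-3 : ZMod p) ^ m := by norm_num

private lemma legendre_neg_three (p : ℕ) [Fact p.Prime] (hp5 : 5 ≤ p) :
    (legendreSym p (-3) : ℤ) = legendreSym 3 p := by
  have hp : p.Prime := Fact.out
  have hp2 : p ≠ 2 := by omega
  have hodd : p % 2 = 1 := hp.eq_two_or_odd.resolve_left hp2
  have h1 : legendreSym p (-3) = legendreSym p (-1) * legendreSym p 3 := by
    rw [← legendreSym.mul]; norm_num
  have h2 : legendreSym p (-1) = (-1) ^ (p / 2) := by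
    rw [legendreSym.at_neg_one hp2, ZMod.χ₄_eq_neg_one_pow hodd]
  have h3 : legendreSym p 3 = (-1) ^ (p / 2) * legendreSym 3 p := by
    have := legendreSym.quadratic_reciprocity' (p := 3) (q := p) (by norm_num) hp2
    simpa using this
  rw [h1, h2, h3, ← mul_assoc, ← pow_add]
  have : ((-1 : ℤ)) ^ (p / 2 + p / 2) = 1 := by
    rw [← two_mul, pow_mul]; norm_num
  rw [this, one_mul]

theorem sum_centralBinom_mod_p (p : ℕ) (hp : p.Prime) (hp5 : 5 ≤ p) :
    (p % 3 = 1 → (∑ n ∈ Finset.range p, (Nat.centralBinom n : ZMod p)) = 1) ∧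
    (p % 3 = 2 → (∑ n ∈ Finset.range p, (Nat.centralBinom n : ZMod p)) = -1) := by
  haveI : Fact p.Prime := ⟨hp⟩
  have hsum := sum_cb p hp5
  have hpow : ((legendreSym p (-3) : ℤ) : ZMod p) = (-3 : ZMod p) ^ (p / 2) := by
    have := legendreSym.eq_pow p (-3)
    rw [this]; push_cast; ring
  constructor
  · intro h
    have hL : legendreSym 3 p = 1 := by
      rw [legendreSym.mod, show (((3:ℕ)):ℤ) = 3 from rfl]
      have : ((p : ℤ) % 3) = 1 := by omega
      rw [this, legendreSym.at_one]
    rw [hsum, ← hpow, legendre_neg_three p hp5, hL]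
    norm_num
  · intro h
    have hL : legendreSym 3 p = -1 := by
      rw [legendreSym.mod, show (((3:ℕ)):ℤ) = 3 from rfl]
      have : ((p : ℤ) % 3) = 2 := by omega
      rw [this]; decide
    rw [hsum, ← hpow, legendre_neg_three p hp5, hL]
    push_cast; ring
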